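/- Let p be an odd prime not dividing Q, with parameters P = √R, Q, D = R - 4Q, where gcd(R,Q) = 1. Set σ = (R/p) and ε = (D/p) (Legendre symbols), assuming p ∤ RD. Then p divides the integer Ū_{p-σε}, where Ū_n = U_n/√R for even n and Ū_n = U_n for odd n, U being the Lucas sequence with parameters √R, Q over ℤ[√R]. -/

import Mathlib

/-- The Lucas sequence with parameters `P = √R`, `Q` in `ℤ[√R]`. -/
def lucasU (R Q : ℤ) : ℕ → Zsqrtd R
  | 0 => 0
  | 1 => 1
  | n + 2 => Zsqrtd.sqrtd * lucasU R Q (n + 1) - (Q : Zsqrtd R) * lucasU R Q n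

/-- The normalized (integer) Lucas sequence: `U n / √R` if `n` even, `U n` if `n` odd. -/
def Ubar (R Q : ℤ) (n : ℕ) : ℤ :=
  if Even n then (lucasU R Q n).im else (lucasU R Q n).re

open Polynomial AdjoinRoot

lemma quad_comp_eq_zero {S : Type*} [CommRing S] {c : S} {f : S[X]} (hf : f = X ^ 2 - C c)
    {a b : S} (h : AdjoinRoot.of f a + AdjoinRoot.of f b * root f = 0) : a = 0 ∧ b = 0 := by
  rcases subsingleton_or_nontrivial S with hS | hS
  · exact ⟨Subsingleton.elim _ _, Subsingleton.elim _ _⟩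
  have hm : f.Monic := by rw [hf]; exact monic_X_pow_sub_C c two_ne_zero
  have h' : AdjoinRoot.mk f (C a + C b * X) = 0 := by
    rwa [map_add, map_mul, AdjoinRoot.mk_X, AdjoinRoot.mk_C, AdjoinRoot.mk_C]
  have h2 := AdjoinRoot.modByMonicHom_mk hm (C a + C b * X)
  rw [h', map_zero] at h2
  have hdeg : (C a + C b * X).degree < f.degree := by
    rw [hf, degree_X_pow_sub_C (by norm_num) c]
    refine lt_of_le_of_lt (degree_add_le _ _) ?_
    refine max_lt (lt_of_le_of_lt degree_C_le (by norm_num)) ?_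
    refine lt_of_le_of_lt (degree_mul_le _ _) ?_
    refine lt_of_le_of_lt (add_le_add degree_C_le degree_X_le) (by norm_num)
  rw [(Polynomial.modByMonic_eq_self_iff hm).mpr hdeg] at h2
  constructor
  · have := congrArg (fun q => Polynomial.coeff q 0) h2
    simpa using this.symm
  · have := congrArg (fun q => Polynomial.coeff q 1) h2
    simpa using this.symm

lemma lucas_key (R Q : ℤ) (p : ℕ) [hp : Fact p.Prime] (hodd : Odd p)
    (hQ : ((Q : ZMod p)) ≠ 0) (hR : ((R : ZMod p)) ≠ 0)
    (hDK : (((R - 4 * Q : ℤ) : ZMod p)) ≠ 0) (n : ℕ)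
    (hn : (n : ℤ) = (p : ℤ) - legendreSym p R * legendreSym p (R - 4 * Q)) :
    (p : ℤ) ∣ (lucasU R Q n).re ∧ (p : ℤ) ∣ (lucasU R Q n).im := by
  set K := ZMod p with hK
  set D : ℤ := R - 4 * Q with hDdef
  set fA : K[X] := X ^ 2 - C ((R : K)) with hfA
  set r : AdjoinRoot fA := root fA with hrdef
  have hrr : r * r = ((R : ℤ) : AdjoinRoot fA) := by
    have h0 := AdjoinRoot.eval₂_root fA
    rw [hfA] at h0
    simp only [eval₂_sub, eval₂_pow, eval₂_X, eval₂_C, sub_eq_zero] at h0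
    rw [← map_intCast (of fA) R, ← pow_two]
    exact h0
  set ψ : Zsqrtd R →+* AdjoinRoot fA := Zsqrtd.lift ⟨r, hrr⟩ with hψ
  set fB : (AdjoinRoot fA)[X] := X ^ 2 - C ((D : AdjoinRoot fA)) with hfB
  set d : AdjoinRoot fB := root fB with hddef
  have hdd : d * d = ((D : ℤ) : AdjoinRoot fB) := by
    have h0 := AdjoinRoot.eval₂_root fB
    rw [hfB] at h0
    simp only [eval₂_sub, eval₂_pow, eval₂_X, eval₂_C, sub_eq_zero] at h0
    rw [← map_intCast (of fB) D, ← pow_two]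
    exact h0
  set ι : K →+* AdjoinRoot fB := (of fB).comp (of fA) with hι
  set φ : Zsqrtd R →+* AdjoinRoot fB := (of fB).comp ψ with hφ
  -- characteristic p
  haveI hchar : CharP (AdjoinRoot fB) p := by
    constructor
    intro x
    constructor
    · intro hx
      rw [show ((x : AdjoinRoot fB)) = of fB ((x : AdjoinRoot fA)) from (map_natCast _ _).symm] at hx
      have h1 : of fB ((x : AdjoinRoot fA)) + of fB 0 * root fB = 0 := by
        rw [map_zero, zero_mul, add_zero]; exact hx
      have h2 := (quad_comp_eq_zero hfB h1).1
      rw [show ((x : AdjoinRoot fA)) = of fA ((x : K)) from (map_natCast _ _).symm] at h2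
      have h3 : of fA ((x : K)) + of fA 0 * root fA = 0 := by
        rw [map_zero, zero_mul, add_zero]; exact h2
      have h4 := (quad_comp_eq_zero hfA h3).1
      exact (ZMod.natCast_eq_zero_iff _ _).mp h4
    · intro hx
      have hpB : ((p : ℕ) : AdjoinRoot fB) = 0 := by
        rw [← map_natCast ι p, show ((p : ℕ) : K) = 0 from by simp, map_zero]
      obtain ⟨c, rfl⟩ := hx
      rw [Nat.cast_mul, hpB, zero_mul]
  -- half, alpha, beta
  have h2K : (2 : K) ≠ 0 := by
    intro h
    rw [show (2 : K) = ((2 : ℕ) : K) by norm_num, ZMod.natCast_eq_zero_iff] at h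
    have := (Nat.prime_dvd_prime_iff_eq hp.out Nat.prime_two).mp h
    rw [this] at hodd
    exact (by decide : ¬ Odd 2) hodd
  set ih : AdjoinRoot fB := ι (2⁻¹ : K) with hihdef
  set rB : AdjoinRoot fB := of fB r with hrB
  set α : AdjoinRoot fB := ih * (rB + d) with hα
  set β : AdjoinRoot fB := ih * (rB - d) with hβ
  have hι2 : ih * 2 = 1 := by
    rw [hihdef, show (2 : AdjoinRoot fB) = ι (2 : K) from (map_ofNat ι 2).symm, ← map_mul,
      inv_mul_cancel₀ h2K, map_one]
  have hadd : α + β = rB := by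
    rw [show α + β = ih * 2 * rB by rw [hα, hβ]; ring, hι2, one_mul]
  have hsub : α - β = d := by
    rw [show α - β = ih * 2 * d by rw [hα, hβ]; ring, hι2, one_mul]
  have hrB2 : rB * rB = ((R : ℤ) : AdjoinRoot fB) := by
    rw [hrB, ← map_mul, hrr, map_intCast]
  have hmul : α * β = ((Q : ℤ) : AdjoinRoot fB) := by
    have h4 : ih * ih * (4 : AdjoinRoot fB) = 1 := by
      rw [hihdef, show (4 : AdjoinRoot fB) = ι (4 : K) from (map_ofNat ι 4).symm, ← map_mul,
        ← map_mul, show (2⁻¹ * 2⁻¹ * 4 : K) = 1 by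
          rw [show (4 : K) = 2 * 2 by norm_num]; rw [mul_mul_mul_comm, inv_mul_cancel₀ h2K, one_mul], map_one]
    calc α * β = ih * ih * (rB * rB - d * d) := by rw [hα, hβ]; ring
      _ = ih * ih * (((R : ℤ) : AdjoinRoot fB) - ((D : ℤ) : AdjoinRoot fB)) := by
          rw [hrB2, hdd]
      _ = ih * ih * (4 : AdjoinRoot fB) * ((Q : ℤ) : AdjoinRoot fB) := by
          rw [hDdef]; push_cast; ring
      _ = ((Q : ℤ) : AdjoinRoot fB) := by rw [h4, one_mul]
  have hφs : φ Zsqrtd.sqrtd = rB := by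
    rw [hφ, RingHom.comp_apply, hψ, hrB]
    congr 1
    simp [Zsqrtd.lift]
  -- main induction
  have main : ∀ m : ℕ, d * φ (lucasU R Q m) = α ^ m - β ^ m := by
    have H : ∀ m : ℕ, d * φ (lucasU R Q m) = α ^ m - β ^ m ∧
        d * φ (lucasU R Q (m + 1)) = α ^ (m + 1) - β ^ (m + 1) := by
      intro m
      induction m with
      | zero =>
        constructor
        · show d * φ (lucasU R Q 0) = _
          rw [show lucasU R Q 0 = 0 from rfl, map_zero, mul_zero, pow_zero, pow_zero, sub_self]
        · show d * φ (lucasU R Q 1) = _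
          rw [show lucasU R Q 1 = 1 from rfl, map_one, mul_one, pow_one, pow_one, hsub]
      | succ k ihk =>
        refine ⟨ihk.2, ?_⟩
        have hU : lucasU R Q (k + 2) =
            Zsqrtd.sqrtd * lucasU R Q (k + 1) - (Q : Zsqrtd R) * lucasU R Q k := rfl
        rw [hU, map_sub, map_mul, map_mul, hφs, map_intCast]
        calc d * (rB * φ (lucasU R Q (k + 1)) - ((Q : ℤ) : AdjoinRoot fB) * φ (lucasU R Q k))
            = rB * (d * φ (lucasU R Q (k + 1))) -
              ((Q : ℤ) : AdjoinRoot fB) * (d * φ (lucasU R Q k)) := by ring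
          _ = (α + β) * (α ^ (k + 1) - β ^ (k + 1)) - α * β * (α ^ k - β ^ k) := by
              rw [ihk.1, ihk.2, hadd, hmul]
          _ = α ^ (k + 2) - β ^ (k + 2) := by ring
    exact fun m => (H m).1
  -- Frobenius
  have hpodd : p = 2 * (p / 2) + 1 := by
    have h1 := Nat.div_add_mod p 2
    have h2 := Nat.odd_iff.mp hodd
    omega
  set σk : K := ((legendreSym p R : ℤ) : K) with hσk
  set εk : K := ((legendreSym p D : ℤ) : K) with hεk
  have hrBp : rB ^ p = ι σk * rB := by
    rw [congrArg (fun t => rB ^ t) hpodd, pow_succ, pow_mul, show rB ^ 2 = ι (R : K) by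
      rw [pow_two, hrB2, ← map_intCast ι R], ← map_pow, ← legendreSym.eq_pow]
  have hdp : d ^ p = ι εk * d := by
    rw [congrArg (fun t => d ^ t) hpodd, pow_succ, pow_mul, show d ^ 2 = ι (D : K) by
      rw [pow_two, hdd, ← map_intCast ι D], ← map_pow, ← legendreSym.eq_pow]
  have hihp : ih ^ p = ih := by
    rw [hihdef, ← map_pow, ZMod.pow_card]
  have hαp : α ^ p = ih * (ι σk * rB + ι εk * d) := by
    rw [hα, mul_pow, hihp, add_pow_char, hrBp, hdp]
  have hβp : β ^ p = ih * (ι σk * rB - ι εk * d) := by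
    rw [hβ, mul_pow, hihp, show rB - d = rB + (-d) by ring, add_pow_char,
      Odd.neg_pow hodd, hrBp, hdp]
    ring
  -- cancellation of d
  have cancel_d : ∀ x : Zsqrtd R, d * φ x = 0 → φ x = 0 := by
    intro x hx
    have hDinv : ι ((D : K)⁻¹ * (D : K)) = 1 := by rw [inv_mul_cancel₀ hDK, map_one]
    calc φ x = ι ((D : K)⁻¹ * (D : K)) * φ x := by rw [hDinv, one_mul]
      _ = ι (D : K)⁻¹ * (((D : ℤ) : AdjoinRoot fB) * φ x) := by
          rw [map_mul, map_intCast]; ring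
      _ = ι (D : K)⁻¹ * (d * (d * φ x)) := by rw [← hdd]; ring
      _ = 0 := by rw [hx, mul_zero, mul_zero]
  have hσ := legendreSym.eq_one_or_neg_one (p := p) (a := R) hR
  have hε := legendreSym.eq_one_or_neg_one (p := p) (a := D) hDK
  have hA : legendreSym p D = legendreSym p R →
      legendreSym p R * legendreSym p R = 1 → φ (lucasU R Q n) = 0 := by
    intro he hss
    rw [he, hss] at hn
    have hnp : n + 1 = p := by omega
    have hεσ : ι εk = ι σk := by rw [hεk, hσk, he]
    have hαp' : α ^ p = ι σk * α := by rw [hαp, hεσ, hα]; ring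
    have hβp' : β ^ p = ι σk * β := by rw [hβp, hεσ, hβ]; ring
    have hcancel : ((Q : ℤ) : AdjoinRoot fB) * (d * φ (lucasU R Q n)) = 0 := by
      rw [main n, ← hmul]
      have hA1 : α ^ n * α = ι σk * α := by
        rw [← pow_succ, congrArg (fun t => α ^ t) hnp, hαp']
      have hB1 : β ^ n * β = ι σk * β := by
        rw [← pow_succ, congrArg (fun t => β ^ t) hnp, hβp']
      calc α * β * (α ^ n - β ^ n) = β * (α ^ n * α) - α * (β ^ n * β) := by ring
        _ = β * (ι σk * α) - α * (ι σk * β) := by rw [hA1, hB1]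
        _ = 0 := by ring
    refine cancel_d _ ?_
    have hQinv : ι ((Q : K)⁻¹ * (Q : K)) = 1 := by rw [inv_mul_cancel₀ hQ, map_one]
    calc d * φ (lucasU R Q n)
        = ι ((Q : K)⁻¹ * (Q : K)) * (d * φ (lucasU R Q n)) := by rw [hQinv, one_mul]
      _ = ι (Q : K)⁻¹ * (((Q : ℤ) : AdjoinRoot fB) * (d * φ (lucasU R Q n))) := by
          rw [map_mul, map_intCast]; ring
      _ = 0 := by rw [hcancel, mul_zero]
  have hB : legendreSym p D = -legendreSym p R →
      legendreSym p R * legendreSym p R = 1 → φ (lucasU R Q n) = 0 := by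
    intro he hss
    rw [he, mul_neg, hss] at hn
    have hnp : n = p + 1 := by omega
    have hεσ : ι εk = -ι σk := by
      rw [hεk, hσk, he, Int.cast_neg, map_neg]
    have hαp' : α ^ p = ι σk * β := by rw [hαp, hεσ, hβ]; ring
    have hβp' : β ^ p = ι σk * α := by rw [hβp, hεσ, hα]; ring
    refine cancel_d _ ?_
    rw [main n, congrArg (fun t => α ^ t) hnp, congrArg (fun t => β ^ t) hnp,
      pow_succ, pow_succ, hαp', hβp']
    ring
  have hφ0 : φ (lucasU R Q n) = 0 := by
    rcases hσ with h1 | h1 <;> rcases hε with h2 | h2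
    · exact hA (h2.trans h1.symm) (by rw [h1]; norm_num)
    · exact hB (by rw [h2, h1]) (by rw [h1]; norm_num)
    · exact hB (by rw [h2, h1]; norm_num) (by rw [h1]; norm_num)
    · exact hA (h2.trans h1.symm) (by rw [h1]; norm_num)
  have hψ0 : ψ (lucasU R Q n) = 0 := by
    have h' : of fB (ψ (lucasU R Q n)) + of fB 0 * root fB = 0 := by
      rw [map_zero, zero_mul, add_zero]
      exact hφ0
    exact (quad_comp_eq_zero hfB h').1
  have hlift : of fA (((lucasU R Q n).re : ℤ) : K) +
      of fA (((lucasU R Q n).im : ℤ) : K) * root fA = 0 := by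
    rw [map_intCast, map_intCast]
    rw [hψ] at hψ0
    simpa [Zsqrtd.lift] using hψ0
  have hcoords := quad_comp_eq_zero hfA hlift
  exact ⟨(ZMod.intCast_zmod_eq_zero_iff_dvd _ p).mp hcoords.1,
    (ZMod.intCast_zmod_eq_zero_iff_dvd _ p).mp hcoords.2⟩

theorem lucas_dvd_Ubar_p_sub_sigma_eps (R Q : ℤ) (hRQ : IsCoprime R Q) (D : ℤ)
    (hD : D = R - 4 * Q) (p : ℕ) (hp : p.Prime) (hodd : Odd p)
    (hpQRD : ¬ ((p : ℤ) ∣ Q * R * D)) :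
    (p : ℤ) ∣ Ubar R Q ((p : ℤ) - @legendreSym p ⟨hp⟩ R * @legendreSym p ⟨hp⟩ D).toNat := by
  haveI : Fact p.Prime := ⟨hp⟩
  subst hD
  have hQd : ¬ (p : ℤ) ∣ Q := fun h => hpQRD (Dvd.dvd.mul_right (h.mul_right R) _)
  have hRd : ¬ (p : ℤ) ∣ R := fun h => hpQRD (Dvd.dvd.mul_right (Dvd.dvd.mul_left h Q) _)
  have hDd : ¬ (p : ℤ) ∣ (R - 4 * Q) := fun h => hpQRD (Dvd.dvd.mul_left h _)
  have hQ : ((Q : ZMod p)) ≠ 0 := fun h => hQd ((ZMod.intCast_zmod_eq_zero_iff_dvd _ _).mp h)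
  have hR : ((R : ZMod p)) ≠ 0 := fun h => hRd ((ZMod.intCast_zmod_eq_zero_iff_dvd _ _).mp h)
  have hDK : (((R - 4 * Q : ℤ) : ZMod p)) ≠ 0 :=
    fun h => hDd ((ZMod.intCast_zmod_eq_zero_iff_dvd _ _).mp h)
  have hσ := legendreSym.eq_one_or_neg_one (p := p) (a := R) hR
  have hε := legendreSym.eq_one_or_neg_one (p := p) (a := R - 4 * Q) hDK
  have hp1 : 1 ≤ p := hp.one_lt.le
  have hse : legendreSym p R * legendreSym p (R - 4 * Q) = 1 ∨
      legendreSym p R * legendreSym p (R - 4 * Q) = -1 := by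
    rcases hσ with h1 | h1 <;> rcases hε with h2 | h2 <;> rw [h1, h2] <;> norm_num
  have hnn : (0 : ℤ) ≤ (p : ℤ) - legendreSym p R * legendreSym p (R - 4 * Q) := by
    rcases hse with h | h <;> rw [h] <;> omega
  have hn : ((((p : ℤ) - legendreSym p R * legendreSym p (R - 4 * Q)).toNat : ℤ))
      = (p : ℤ) - legendreSym p R * legendreSym p (R - 4 * Q) := Int.toNat_of_nonneg hnn
  have key := lucas_key R Q p hodd hQ hR hDK _ hn
  unfold Ubar
  split
  · exact key.2
  · exact key.1
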